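/- arXiv:2311.05654 — 2 statements merged into one kernel-verified Lean document; each statement's English description precedes it below -/
import Mathlib

section
/- Existence and uniqueness of the inverse system of formal power series: Let f₁, …, fₙ be multivariate formal power series in n variables over a commutative ring. Then there exist unique formal power series g₁, …, gₙ, each with zero constant term, satisfying gᵢ = xᵢ · fᵢ(g₁, …, gₙ) for all i = 1, …, n. -/
open MvPowerSeries

/-- Substitution of a family of multivariate formal power series `g` (intended to have zero
constant term) into a multivariate formal power series `f`.  The coefficient of a monomial `d`
in `f(g₁, …, gₙ)` is the (finite, when every `gᵢ` has zero constant term) sum over all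
multi-indices `e` of `(coeff e f) * coeff d (g₁^{e₁} ⋯ gₙ^{eₙ})`. -/
noncomputable def MvPowerSeries.substFun {n : ℕ} {R : Type*} [CommRing R]
    (f : MvPowerSeries (Fin n) R) (g : Fin n → MvPowerSeries (Fin n) R) :
    MvPowerSeries (Fin n) R :=
  fun d => ∑ᶠ e : Fin n →₀ ℕ, coeff e f * coeff d (∏ i : Fin n, g i ^ e i)

section Aux

variable {n : ℕ} {R : Type*} [CommRing R]

lemma LG.deg_eq (d : Fin n →₀ ℕ) : d.degree = ∑ i : Fin n, d i := by
  rw [Finsupp.degree]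
  exact Finset.sum_subset (Finset.subset_univ _)
    (fun x _ hx => Finsupp.notMem_support_iff.mp hx)

lemma LG.degree_add (a b : Fin n →₀ ℕ) : (a + b).degree = a.degree + b.degree := by
  simp [LG.deg_eq, Finset.sum_add_distrib]

lemma LG.degree_mono {a b : Fin n →₀ ℕ} (h : a ≤ b) : a.degree ≤ b.degree := by
  rw [LG.deg_eq, LG.deg_eq]
  exact Finset.sum_le_sum fun i _ => h i

lemma LG.degree_single (i : Fin n) : (Finsupp.single i 1).degree = 1 := by
  classical
  rw [LG.deg_eq]
  simp [Finsupp.single_apply]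

/-- Vanishing of a coefficient of a product of powers when the total exponent is too large. -/
lemma LG.coeff_prod_pow_eq_zero {g : Fin n → MvPowerSeries (Fin n) R}
    (hg : ∀ i, constantCoeff (g i) = 0)
    {e d : Fin n →₀ ℕ} (h : d.degree < e.degree) :
    coeff d (∏ i : Fin n, g i ^ e i) = 0 := by
  classical
  rw [coeff_prod]
  apply Finset.sum_eq_zero
  intro l hl
  rw [Finset.mem_finsuppAntidiag] at hl
  have hsum : ∑ i : Fin n, l i = d := hl.1
  have : ∃ i : Fin n, (l i).degree < e i := by
    by_contra hc
    push_neg at hc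
    have h1 : e.degree ≤ ∑ i : Fin n, (l i).degree := by
      rw [LG.deg_eq]
      exact Finset.sum_le_sum fun i _ => hc i
    have h2 : ∑ i : Fin n, (l i).degree = d.degree := by
      rw [← hsum, LG.deg_eq]
      simp only [LG.deg_eq]
      rw [Finset.sum_comm]
      refine Finset.sum_congr rfl fun j _ => ?_
      simp [Finsupp.finset_sum_apply]
    omega
  obtain ⟨i, hi⟩ := this
  apply Finset.prod_eq_zero (Finset.mem_univ i)
  apply coeff_eq_zero_of_constantCoeff_nilpotent (m := 1)
  · rw [pow_one, hg i]
  · omega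

/-- The coefficient of a product of powers only depends on lower coefficients. -/
lemma LG.coeff_prod_pow_congr {g h : Fin n → MvPowerSeries (Fin n) R}
    {d : Fin n →₀ ℕ}
    (hgh : ∀ j (d' : Fin n →₀ ℕ), d' ≤ d → coeff d' (g j) = coeff d' (h j))
    (e : Fin n →₀ ℕ) :
    coeff d (∏ i : Fin n, g i ^ e i) = coeff d (∏ i : Fin n, h i ^ e i) := by
  classical
  rw [coeff_prod, coeff_prod]
  apply Finset.sum_congr rfl
  intro l hl
  rw [Finset.mem_finsuppAntidiag] at hl
  apply Finset.prod_congr rfl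
  intro i _
  have hld : l i ≤ d := hl.1 ▸ Finset.single_le_sum
    (f := fun j => l j) (fun _ _ => zero_le) (Finset.mem_univ i)
  rw [coeff_pow, coeff_pow]
  apply Finset.sum_congr rfl
  intro k hk
  rw [Finset.mem_finsuppAntidiag] at hk
  apply Finset.prod_congr rfl
  intro j hj
  have hkj : k j ≤ l i := hk.1 ▸ Finset.single_le_sum
    (f := fun j => k j) (fun _ _ => zero_le) hj
  exact hgh i (k j) (le_trans hkj hld)

lemma LG.coeff_substFun (f : MvPowerSeries (Fin n) R) {g : Fin n → MvPowerSeries (Fin n) R}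
    (hg : ∀ i, constantCoeff (g i) = 0) (d : Fin n →₀ ℕ) :
    coeff d (f.substFun g) =
      ∑ e ∈ Finset.Iic (Finsupp.equivFunOnFinite.symm fun _ => d.degree),
        coeff e f * coeff d (∏ i : Fin n, g i ^ e i) := by
  rw [show coeff d (f.substFun g)
      = ∑ᶠ e : Fin n →₀ ℕ, coeff e f * coeff d (∏ i : Fin n, g i ^ e i) from rfl]
  apply finsum_eq_finset_sum_of_support_subset
  intro e he
  simp only [Function.mem_support] at he
  have h2 : coeff d (∏ i : Fin n, g i ^ e i) ≠ 0 := fun h0 => he (by rw [h0, mul_zero])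
  have hdeg : e.degree ≤ d.degree := by
    by_contra hc
    exact h2 (LG.coeff_prod_pow_eq_zero hg (by omega))
  simp only [Finset.coe_Iic, Set.mem_Iic]
  intro i
  simp only [Finsupp.coe_equivFunOnFinite_symm]
  exact le_trans (Finsupp.le_degree i e) hdeg

lemma LG.coeff_substFun_congr (f : MvPowerSeries (Fin n) R)
    {g h : Fin n → MvPowerSeries (Fin n) R}
    (hg : ∀ i, constantCoeff (g i) = 0)
    (hh : ∀ i, constantCoeff (h i) = 0)
    {d : Fin n →₀ ℕ}
    (hgh : ∀ j (d' : Fin n →₀ ℕ), d' ≤ d → coeff d' (g j) = coeff d' (h j)) :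
    coeff d (f.substFun g) = coeff d (f.substFun h) := by
  rw [LG.coeff_substFun f hg d, LG.coeff_substFun f hh d]
  exact Finset.sum_congr rfl fun e _ => by rw [LG.coeff_prod_pow_congr hgh e]

lemma LG.coeff_X_mul (i : Fin n) (F : MvPowerSeries (Fin n) R) (d : Fin n →₀ ℕ) :
    coeff d (X i * F) =
      if Finsupp.single i 1 ≤ d then coeff (d - Finsupp.single i 1) F else 0 := by
  rw [X_def, coeff_monomial_mul]
  split_ifs with h
  · rw [one_mul]
  · rfl

/-- The key step comparison lemma. -/
lemma LG.step_congr (fi : MvPowerSeries (Fin n) R)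
    {g h : Fin n → MvPowerSeries (Fin n) R}
    (hg : ∀ i, constantCoeff (g i) = 0)
    (hh : ∀ i, constantCoeff (h i) = 0)
    (m : ℕ)
    (hgh : ∀ j (d' : Fin n →₀ ℕ), d'.degree < m → coeff d' (g j) = coeff d' (h j))
    (i : Fin n) (d : Fin n →₀ ℕ) (hd : d.degree ≤ m) :
    coeff d (X i * fi.substFun g) = coeff d (X i * fi.substFun h) := by
  rw [LG.coeff_X_mul, LG.coeff_X_mul]
  split_ifs with hle
  · have hdd : (d - Finsupp.single i 1).degree + 1 = d.degree := by
      have h1 : (d - Finsupp.single i 1) + Finsupp.single i 1 = d :=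
        tsub_add_cancel_of_le hle
      conv_rhs => rw [← h1]
      rw [LG.degree_add, LG.degree_single]
    apply LG.coeff_substFun_congr fi hg hh
    intro j d' hd'
    apply hgh
    have := LG.degree_mono hd'
    omega
  · rfl

end Aux

/-- Existence and uniqueness of the inverse system of formal power series:
given multivariate formal power series `f₁, …, fₙ` in `n` variables over a commutative ring,
there exist unique formal power series `g₁, …, gₙ`, each with zero constant term, satisfying
`gᵢ = xᵢ · fᵢ(g₁, …, gₙ)` for all `i`. -/
theorem lagrange_good_exists_unique {n : ℕ} {R : Type*} [CommRing R]
    (f : Fin n → MvPowerSeries (Fin n) R) :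
    ∃! g : Fin n → MvPowerSeries (Fin n) R,
      (∀ i, constantCoeff (g i) = 0) ∧
      (∀ i, g i = X i * (f i).substFun g) := by
  classical
  -- the iteration sequence
  set seq : ℕ → (Fin n → MvPowerSeries (Fin n) R) :=
    fun k => Nat.rec (fun _ => 0) (fun _ gk i => X i * (f i).substFun gk) k with hseq
  have seq_succ : ∀ k i, seq (k + 1) i = X i * (f i).substFun (seq k) := fun _ _ => rfl
  have hX0 : ∀ (i : Fin n) (F : MvPowerSeries (Fin n) R),
      constantCoeff (X i * F) = 0 := by
    intro i F
    rw [← coeff_zero_eq_constantCoeff_apply, LG.coeff_X_mul]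
    rw [if_neg]
    intro hle
    have := LG.degree_mono hle
    rw [LG.degree_single] at this
    simp at this
  have seq0 : ∀ k i, constantCoeff (seq k i) = 0 := by
    intro k i
    cases k with
    | zero => simp [hseq]
    | succ k => rw [seq_succ]; exact hX0 i _
  -- stabilization
  have stab : ∀ k (d : Fin n →₀ ℕ), d.degree ≤ k → ∀ i,
      coeff d (seq (k + 1) i) = coeff d (seq k i) := by
    intro k
    induction k with
    | zero =>
      intro d hd i
      have : d = 0 := by
        rwa [Nat.le_zero, Finsupp.degree_eq_zero_iff] at hd
      subst this
      rw [coeff_zero_eq_constantCoeff_apply, coeff_zero_eq_constantCoeff_apply]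
      exact (seq0 (0 + 1) i).trans (seq0 0 i).symm
    | succ k ih =>
      intro d hd i
      rw [seq_succ (k + 1) i, seq_succ k i]
      exact LG.step_congr (f i) (seq0 (k + 1)) (seq0 k) (k + 1)
        (fun j d' hd' => ih d' (Nat.lt_succ_iff.mp hd') j) i d hd
  -- the limit
  set g : Fin n → MvPowerSeries (Fin n) R := fun i d => coeff d (seq d.degree i) with hgdef
  have hg_coeff : ∀ (d : Fin n →₀ ℕ) i, coeff d (g i) = coeff d (seq d.degree i) :=
    fun _ _ => rfl
  have hg_lim : ∀ (d : Fin n →₀ ℕ) k, d.degree ≤ k → ∀ i,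
      coeff d (g i) = coeff d (seq k i) := by
    intro d k
    induction k with
    | zero =>
      intro hd i
      rw [hg_coeff, Nat.le_zero.mp hd]
    | succ k ih =>
      intro hd i
      rcases eq_or_lt_of_le hd with h | h
      · rw [hg_coeff, h]
      · have hk : d.degree ≤ k := Nat.lt_succ_iff.mp h
        rw [ih hk i, ← stab k d hk i]
  -- `g` has zero constant coefficients
  have g0 : ∀ i, constantCoeff (g i) = 0 := by
    intro i
    rw [← coeff_zero_eq_constantCoeff_apply, hg_lim 0 0 (by simp) i]
    rw [coeff_zero_eq_constantCoeff_apply, seq0]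
  -- `g` is a fixed point
  have gfix : ∀ i, g i = X i * (f i).substFun g := by
    intro i
    ext d
    rw [hg_lim d (d.degree + 1) (Nat.le_succ _) i, seq_succ d.degree i]
    exact LG.step_congr (f i) (seq0 d.degree) g0 d.degree
      (fun j d' hd' => (hg_lim d' d.degree (le_of_lt hd') j).symm) i d le_rfl
  refine ⟨g, ⟨g0, gfix⟩, ?_⟩
  rintro h ⟨h0, hfix⟩
  have key : ∀ m (d : Fin n →₀ ℕ), d.degree ≤ m → ∀ i,
      coeff d (h i) = coeff d (g i) := by
    intro m
    induction m with
    | zero =>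
      intro d hd i
      have : d = 0 := by rwa [Nat.le_zero, Finsupp.degree_eq_zero_iff] at hd
      subst this
      simp only [coeff_zero_eq_constantCoeff_apply, h0, g0]
    | succ m ih =>
      intro d hd i
      rw [hfix i, gfix i]
      exact LG.step_congr (f i) h0 g0 (m + 1)
        (fun j d' hd' => ih d' (Nat.lt_succ_iff.mp hd') j) i d hd
  funext i
  ext d
  exact key d.degree d le_rfl i
end

section
/- Classical (single-variable) Lagrange inversion as the case n = 1: Let f be a formal power series in one variable over a commutative ℚ-algebra with nonzero constant term, and let g be the unique formal power series with zero constant term satisfying g = x · f(g). Then for every formal power series φ and every natural number k, the coefficient of x^k in φ(g) / (1 − x · f'(g)) equals the coefficient of x^k in φ(x) · f(x)^k. -/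
open PowerSeries

/-- Substitution of a formal power series `g` (intended to have zero constant term) into a
formal power series `f`.  The coefficient of `x^d` in `f(g)` is the (finite, when `g` has zero
constant term) sum over all `e` of `(coeff e f) * coeff d (g^e)`. -/
noncomputable def PowerSeries.substFun {R : Type*} [CommRing R] (f g : PowerSeries R) :
    PowerSeries R :=
  PowerSeries.mk fun d => ∑ᶠ e : ℕ, coeff e f * coeff d (g ^ e)

namespace LagrangeAux

variable {R : Type*} [CommRing R]

theorem coeff_pow_eq_zero {g : R⟦X⟧} (hg0 : constantCoeff g = 0) {d e : ℕ} (h : d < e) :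
    coeff d (g ^ e) = 0 := by
  have hdvd : (X : R⟦X⟧) ^ e ∣ g ^ e := pow_dvd_pow_of_dvd (X_dvd_iff.mpr hg0) e
  exact X_pow_dvd_iff.mp hdvd d h

theorem coeff_substFun {f g : R⟦X⟧} (hg0 : constantCoeff g = 0) (d : ℕ) :
    coeff d (f.substFun g) = ∑ e ∈ Finset.range (d + 1), coeff e f * coeff d (g ^ e) := by
  rw [PowerSeries.substFun, coeff_mk]
  apply finsum_eq_sum_of_support_subset
  intro e he
  simp only [Function.mem_support] at he
  simp only [Finset.coe_range, Set.mem_Iio]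
  by_contra hcon
  push_neg at hcon
  exact he (by rw [coeff_pow_eq_zero hg0 (by omega), mul_zero])

theorem coeff_pow_congr {a b : R⟦X⟧} {d : ℕ} (h : ∀ i ≤ d, coeff i a = coeff i b)
    (e : ℕ) : ∀ d' ≤ d, coeff d' (a ^ e) = coeff d' (b ^ e) := by
  induction e with
  | zero => intro d' _; rfl
  | succ e ih =>
    intro d' hd'
    rw [pow_succ, pow_succ, coeff_mul, coeff_mul]
    apply Finset.sum_congr rfl
    intro p hp
    rw [Finset.HasAntidiagonal.mem_antidiagonal] at hp
    rw [ih p.1 (by omega), h p.2 (by omega)]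

theorem coeff_substFun_congr {f a b : R⟦X⟧} (ha : constantCoeff a = 0)
    (hb : constantCoeff b = 0) {d : ℕ} (h : ∀ i ≤ d, coeff i a = coeff i b) :
    ∀ d' ≤ d, coeff d' (f.substFun a) = coeff d' (f.substFun b) := by
  intro d' hd'
  rw [coeff_substFun ha, coeff_substFun hb]
  exact Finset.sum_congr rfl fun e _ => by rw [coeff_pow_congr h e d' hd']

theorem coeff_substFun_mul {f g : R⟦X⟧} (hg0 : constantCoeff g = 0) (h : R⟦X⟧) (d : ℕ) :
    coeff d (f.substFun g * h) =
      ∑ e ∈ Finset.range (d + 1), coeff e f * coeff d (g ^ e * h) := by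
  rw [coeff_mul]
  have step : ∀ p ∈ Finset.HasAntidiagonal.antidiagonal d, coeff p.1 (f.substFun g) * coeff p.2 h
      = ∑ e ∈ Finset.range (d + 1), coeff e f * (coeff p.1 (g ^ e) * coeff p.2 h) := by
    intro p hp
    rw [Finset.HasAntidiagonal.mem_antidiagonal] at hp
    rw [coeff_substFun hg0, Finset.sum_mul]
    rw [Finset.sum_subset (Finset.range_subset_range.mpr (by omega : p.1 + 1 ≤ d + 1))]
    · exact Finset.sum_congr rfl fun e _ => by ring
    · intro e _ he
      rw [Finset.mem_range, not_lt] at he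
      rw [coeff_pow_eq_zero hg0 (by omega), mul_zero, zero_mul]
  rw [Finset.sum_congr rfl step, Finset.sum_comm]
  exact Finset.sum_congr rfl fun e _ => by rw [← Finset.mul_sum, coeff_mul]

theorem coeff_mul_substFun {f g : R⟦X⟧} (hg0 : constantCoeff g = 0) (h : R⟦X⟧) (d : ℕ) :
    coeff d (h * f.substFun g) =
      ∑ e ∈ Finset.range (d + 1), coeff e f * coeff d (h * g ^ e) := by
  rw [mul_comm, coeff_substFun_mul hg0]
  exact Finset.sum_congr rfl fun e _ => by rw [mul_comm h]

variable {R : Type*} [CommRing R]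
open Finset

theorem substFun_zero (g : R⟦X⟧) : (0 : R⟦X⟧).substFun g = 0 := by
  ext d
  rw [PowerSeries.substFun, coeff_mk]
  simp

theorem substFun_add {g : R⟦X⟧} (hg0 : constantCoeff g = 0) (a b : R⟦X⟧) :
    (a + b).substFun g = a.substFun g + b.substFun g := by
  ext d
  rw [map_add, coeff_substFun hg0, coeff_substFun hg0, coeff_substFun hg0, ← Finset.sum_add_distrib]
  exact Finset.sum_congr rfl fun e _ => by rw [map_add, add_mul]

theorem substFun_sum {g : R⟦X⟧} (hg0 : constantCoeff g = 0) {α : Type*} (s : Finset α)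
    (F : α → R⟦X⟧) : (∑ i ∈ s, F i).substFun g = ∑ i ∈ s, (F i).substFun g := by
  induction s using Finset.cons_induction with
  | empty => simp [substFun_zero]
  | cons a s ha ih => rw [Finset.sum_cons, Finset.sum_cons, substFun_add hg0, ih]

theorem substFun_C {g : R⟦X⟧} (hg0 : constantCoeff g = 0) (r : R) :
    (C r).substFun g = C r := by
  ext d
  rw [coeff_substFun hg0]
  rw [Finset.sum_eq_single 0]
  · simp [PowerSeries.coeff_C]
  · intro e _ he
    rw [coeff_C, if_neg he, zero_mul]
  · intro h
    exact absurd (Finset.mem_range.mpr (by omega)) h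

theorem substFun_one {g : R⟦X⟧} (hg0 : constantCoeff g = 0) :
    (1 : R⟦X⟧).substFun g = 1 := by
  rw [← map_one (C (R := R)), substFun_C hg0, map_one]

theorem substFun_X {g : R⟦X⟧} (hg0 : constantCoeff g = 0) :
    (X : R⟦X⟧).substFun g = g := by
  ext d
  rw [coeff_substFun hg0]
  rw [Finset.sum_eq_single 1]
  · simp [coeff_X]
  · intro e _ he
    rw [coeff_X, if_neg he, zero_mul]
  · intro h
    rw [Finset.mem_range, not_lt] at h
    have hd : d = 0 := by omega
    subst hd
    simp [hg0]

theorem substFun_mul {g : R⟦X⟧} (hg0 : constantCoeff g = 0) (a b : R⟦X⟧) :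
    (a * b).substFun g = a.substFun g * b.substFun g := by
  ext d
  have hrhs : coeff d (a.substFun g * b.substFun g)
      = ∑ p ∈ Finset.range (d + 1), ∑ q ∈ Finset.range (d + 1),
          coeff p a * coeff q b * coeff d (g ^ (p + q)) := by
    rw [coeff_substFun_mul hg0]
    refine Finset.sum_congr rfl fun p _ => ?_
    rw [coeff_mul_substFun hg0, Finset.mul_sum]
    refine Finset.sum_congr rfl fun q _ => ?_
    rw [← pow_add]
    ring
  rw [hrhs, coeff_substFun hg0]
  have hlhs : ∑ e ∈ Finset.range (d + 1), coeff e (a * b) * coeff d (g ^ e)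
      = ∑ e ∈ Finset.range (d + 1), ∑ p ∈ Finset.HasAntidiagonal.antidiagonal e,
          coeff p.1 a * coeff p.2 b * coeff d (g ^ (p.1 + p.2)) := by
    refine Finset.sum_congr rfl fun e he => ?_
    rw [coeff_mul, Finset.sum_mul]
    refine Finset.sum_congr rfl fun p hp => ?_
    rw [Finset.HasAntidiagonal.mem_antidiagonal] at hp
    rw [hp]
  rw [hlhs]
  rw [← Finset.sum_biUnion]
  · rw [Finset.sum_subset (s₁ := (Finset.range (d+1)).biUnion Finset.HasAntidiagonal.antidiagonal)
      (s₂ := Finset.range (d+1) ×ˢ Finset.range (d+1))]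
    · rw [Finset.sum_product]
    · intro p hp
      rw [Finset.mem_biUnion] at hp
      obtain ⟨e, he, hpe⟩ := hp
      rw [Finset.mem_range] at he
      rw [Finset.HasAntidiagonal.mem_antidiagonal] at hpe
      rw [Finset.mem_product, Finset.mem_range, Finset.mem_range]
      omega
    · intro p hp hnp
      have : d < p.1 + p.2 := by
        by_contra hc
        push_neg at hc
        exact hnp (Finset.mem_biUnion.mpr ⟨p.1 + p.2, Finset.mem_range.mpr (by omega),
          Finset.HasAntidiagonal.mem_antidiagonal.mpr rfl⟩)
      rw [coeff_pow_eq_zero hg0 this, mul_zero]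
  · intro e₁ _ e₂ _ hne
    simp only [Function.onFun]
    rw [Finset.disjoint_left]
    intro p hp1 hp2
    rw [Finset.HasAntidiagonal.mem_antidiagonal] at hp1 hp2
    exact hne (by omega)

theorem substFun_pow {g : R⟦X⟧} (hg0 : constantCoeff g = 0) (a : R⟦X⟧) (n : ℕ) :
    (a ^ n).substFun g = a.substFun g ^ n := by
  induction n with
  | zero => simpa using substFun_one hg0
  | succ n ih => rw [pow_succ, pow_succ, substFun_mul hg0, ih]

theorem constantCoeff_substFun {f g : R⟦X⟧} (hg0 : constantCoeff g = 0) :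
    constantCoeff (f.substFun g) = constantCoeff f := by
  rw [← coeff_zero_eq_constantCoeff, coeff_substFun hg0]
  simp


theorem derivative_substFun {g : R⟦X⟧} (hg0 : constantCoeff g = 0) (f : R⟦X⟧) :
    d⁄dX R (f.substFun g) = (d⁄dX R f).substFun g * d⁄dX R g := by
  ext d
  rw [coeff_derivative, coeff_substFun_mul hg0, coeff_substFun hg0 (d + 1), Finset.sum_mul,
    Finset.sum_range_succ']
  have h0 : coeff 0 f * coeff (d + 1) ((g : R⟦X⟧) ^ 0) * ((d : R) + 1) = 0 := by
    rw [pow_zero, coeff_one, if_neg (by omega : ¬ d + 1 = 0)]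
    ring
  rw [h0, add_zero]
  refine Finset.sum_congr rfl fun i _ => ?_
  have key : coeff (d + 1) (g ^ (i + 1)) * ((d : R) + 1)
      = ((i : R) + 1) * coeff d (g ^ i * d⁄dX R g) := by
    have hD : d⁄dX R (g ^ (i + 1)) = (i + 1) • (g ^ i * d⁄dX R g) := by
      rw [Derivation.leibniz_pow]
      simp [smul_eq_mul]
    have := coeff_derivative (g ^ (i + 1)) d
    rw [hD, map_nsmul, nsmul_eq_mul] at this
    rw [← this]
    push_cast
    ring
  rw [coeff_derivative, mul_assoc, mul_assoc, key]

variable {S : Type*} [CommRing S]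

theorem constantCoeff_map (ρ : R →+* S) (g : R⟦X⟧) :
    constantCoeff (PowerSeries.map ρ g) = ρ (constantCoeff g) := by
  rw [← coeff_zero_eq_constantCoeff, coeff_map, coeff_zero_eq_constantCoeff]

theorem map_substFun (ρ : R →+* S) {g : R⟦X⟧} (hg0 : constantCoeff g = 0) (f : R⟦X⟧) :
    PowerSeries.map ρ (f.substFun g) =
      (PowerSeries.map ρ f).substFun (PowerSeries.map ρ g) := by
  have hg0' : constantCoeff (PowerSeries.map ρ g) = 0 := by
    rw [constantCoeff_map, hg0, map_zero]
  ext d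
  rw [coeff_map, coeff_substFun hg0, coeff_substFun hg0', map_sum]
  refine Finset.sum_congr rfl fun e _ => ?_
  rw [map_mul, coeff_map, ← map_pow, coeff_map]

theorem map_derivative (ρ : R →+* S) (f : R⟦X⟧) :
    PowerSeries.map ρ (d⁄dX R f) = d⁄dX S (PowerSeries.map ρ f) := by
  ext d
  rw [coeff_map, coeff_derivative, coeff_derivative, coeff_map, map_mul, map_add,
    map_natCast, map_one]

theorem map_invOfUnit_one (ρ : R →+* S) (v : R⟦X⟧) (hv : constantCoeff v = 1) :
    PowerSeries.map ρ (PowerSeries.invOfUnit v 1) =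
      PowerSeries.invOfUnit (PowerSeries.map ρ v) 1 := by
  have hv' : constantCoeff (PowerSeries.map ρ v) = ((1 : Sˣ) : S) := by
    rw [constantCoeff_map, hv, map_one, Units.val_one]
  have h1 : PowerSeries.map ρ v * PowerSeries.map ρ (PowerSeries.invOfUnit v 1) = 1 := by
    rw [← map_mul, PowerSeries.mul_invOfUnit v 1 (by rw [hv, Units.val_one]), map_one]
  have h2 : PowerSeries.map ρ v * PowerSeries.invOfUnit (PowerSeries.map ρ v) 1 = 1 :=
    PowerSeries.mul_invOfUnit _ 1 hv'
  calc PowerSeries.map ρ (PowerSeries.invOfUnit v 1)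
      = PowerSeries.map ρ (PowerSeries.invOfUnit v 1) *
        (PowerSeries.map ρ v * PowerSeries.invOfUnit (PowerSeries.map ρ v) 1) := by
        rw [h2, mul_one]
    _ = (PowerSeries.map ρ v * PowerSeries.map ρ (PowerSeries.invOfUnit v 1)) *
        PowerSeries.invOfUnit (PowerSeries.map ρ v) 1 := by ring
    _ = PowerSeries.invOfUnit (PowerSeries.map ρ v) 1 := by rw [h1, one_mul]

/-- Successive approximations to the fixed point `g = X * f(g)`. -/
noncomputable def gSeq (f : R⟦X⟧) : ℕ → R⟦X⟧
  | 0 => 0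
  | N + 1 => X * f.substFun (gSeq f N)

theorem gSeq_const (f : R⟦X⟧) (N : ℕ) : constantCoeff (gSeq f N) = 0 := by
  cases N with
  | zero => simp [gSeq]
  | succ N => simp [gSeq]

theorem gSeq_coeff_eq {f a : R⟦X⟧} (ha : a = X * f.substFun a) :
    ∀ N, ∀ d < N, coeff d a = coeff d (gSeq f N) := by
  have ha0 : constantCoeff a = 0 := by rw [ha]; simp
  intro N
  induction N with
  | zero => omega
  | succ N ih =>
    intro d hd
    cases d with
    | zero =>
      rw [coeff_zero_eq_constantCoeff, ha0, gSeq_const]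
    | succ d =>
      conv_lhs => rw [ha]
      rw [gSeq, coeff_succ_X_mul, coeff_succ_X_mul]
      exact coeff_substFun_congr ha0 (gSeq_const f N) (fun i hi => ih i (by omega)) d le_rfl

theorem substFix_unique {f a b : R⟦X⟧} (ha : a = X * f.substFun a)
    (hb : b = X * f.substFun b) : a = b := by
  ext d
  rw [gSeq_coeff_eq ha (d + 1) d (by omega), gSeq_coeff_eq hb (d + 1) d (by omega)]

/-- The canonical fixed point of `g = X * f(g)`. -/
noncomputable def gFix (f : R⟦X⟧) : R⟦X⟧ :=
  PowerSeries.mk fun d => coeff d (gSeq f (d + 1))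

theorem gSeq_stab (f : R⟦X⟧) : ∀ N, ∀ d < N, ∀ M, N ≤ M →
    coeff d (gSeq f N) = coeff d (gSeq f M) := by
  have step : ∀ N, ∀ d < N, coeff d (gSeq f N) = coeff d (gSeq f (N + 1)) := by
    intro N
    induction N with
    | zero => omega
    | succ N ih =>
      intro d hd
      cases d with
      | zero => rw [coeff_zero_eq_constantCoeff, gSeq_const, gSeq_const]
      | succ d =>
        rw [gSeq, gSeq, coeff_succ_X_mul, coeff_succ_X_mul]
        exact coeff_substFun_congr (gSeq_const f N) (gSeq_const f (N + 1))
          (fun i hi => ih i (by omega)) d le_rfl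
  intro N d hd M hNM
  induction M with
  | zero => omega
  | succ M ihM =>
    rcases Nat.lt_or_ge N (M + 1) with h | h
    · have hNM' : N ≤ M := by omega
      rw [ihM hNM', step M d (by omega)]
    · have : N = M + 1 := by omega
      subst this
      rfl

theorem coeff_gFix (f : R⟦X⟧) {d N : ℕ} (h : d < N) :
    coeff d (gFix f) = coeff d (gSeq f N) := by
  rw [gFix, coeff_mk]
  exact gSeq_stab f (d + 1) d (by omega) N (by omega)

theorem gFix_const (f : R⟦X⟧) : constantCoeff (gFix f) = 0 := by
  rw [← coeff_zero_eq_constantCoeff, coeff_gFix f (by omega : (0:ℕ) < 1),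
    coeff_zero_eq_constantCoeff, gSeq_const]

theorem gFix_eq (f : R⟦X⟧) : gFix f = X * f.substFun (gFix f) := by
  ext d
  cases d with
  | zero =>
    rw [coeff_zero_eq_constantCoeff, gFix_const]
    simp
  | succ d =>
    rw [coeff_gFix f (by omega : d + 1 < d + 2), gSeq, coeff_succ_X_mul, coeff_succ_X_mul]
    exact coeff_substFun_congr (gSeq_const f (d + 1)) (gFix_const f)
      (fun i hi => (coeff_gFix f (by omega : i < d + 1)).symm) d le_rfl


section FieldCase

variable {K : Type*} [Field K] [CharZero K]

theorem lagrange_core (f : K⟦X⟧) (hf : constantCoeff f ≠ 0)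
    (g : K⟦X⟧) (hg : g = X * f.substFun g) (k e : ℕ) (he : e ≤ k) :
    coeff k (g ^ e * PowerSeries.invOfUnit (1 - X * (d⁄dX K f).substFun g) 1)
      = coeff k (X ^ e * f ^ k) := by
  have hg0 : constantCoeff g = 0 := by rw [hg]; simp
  set u := f.substFun g with hu
  set A := (1 - X * (d⁄dX K f).substFun g) with hA
  set W := PowerSeries.invOfUnit A 1 with hWdef
  have hA0 : constantCoeff A = 1 := by rw [hA]; simp
  have hAW : A * W = 1 := PowerSeries.mul_invOfUnit A 1 (by rw [hA0, Units.val_one])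
  have hu0' : constantCoeff u ≠ 0 := by
    rw [hu, constantCoeff_substFun hg0]; exact hf
  set v := u⁻¹ with hv
  have huv : u * v = 1 := PowerSeries.mul_inv_cancel u hu0'
  have hchain : d⁄dX K u = (d⁄dX K f).substFun g * d⁄dX K g := derivative_substFun hg0 f
  have hgd : d⁄dX K g = u + X * d⁄dX K u := by
    conv_lhs => rw [hg]
    rw [Derivation.leibniz]
    simp only [smul_eq_mul, derivative_X, mul_one]
    ring
  have key1 : d⁄dX K g * A = u := by
    have h1 : d⁄dX K g * A = d⁄dX K g - X * ((d⁄dX K f).substFun g * d⁄dX K g) := by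
      rw [hA]; ring
    rw [h1, ← hchain, hgd]; ring
  have hgW : g ^ e * W = g ^ e * d⁄dX K g * v := by
    calc g ^ e * W = g ^ e * W * (d⁄dX K g * A * v) := by rw [key1, huv, mul_one]
      _ = g ^ e * d⁄dX K g * v * (A * W) := by ring
      _ = g ^ e * d⁄dX K g * v := by rw [hAW, mul_one]
  obtain ⟨j, hj⟩ : ∃ j, k = e + j := ⟨k - e, by omega⟩
  set P := f ^ k with hP
  set p : ℕ → K := fun i => coeff i P with hp
  set Pt := PowerSeries.mk (fun t => coeff (t + j + 1) P) with hPt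
  have hPdec : P = (∑ i ∈ Finset.range (j + 1), C (p i) * X ^ i) + X ^ (j + 1) * Pt := by
    ext d
    have hterm : ∀ i, coeff d (C (p i) * X ^ i) = if d = i then p i else 0 := by
      intro i; rw [coeff_C_mul, coeff_X_pow]; split_ifs <;> simp
    rw [map_add, coeff_X_pow_mul', map_sum, Finset.sum_congr rfl fun i _ => hterm i,
      Finset.sum_ite_eq (Finset.range (j + 1)) d p]
    by_cases hd : d ≤ j
    · rw [if_pos (Finset.mem_range.mpr (by omega)), if_neg (by omega), add_zero]
    · rw [if_neg (by simp only [Finset.mem_range]; omega), if_pos (by omega), zero_add,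
        hPt, coeff_mk]
      have harg : d - (j + 1) + j + 1 = d := by omega
      rw [harg]
  have hPg : u ^ k = (∑ i ∈ Finset.range (j + 1), C (p i) * g ^ i)
      + g ^ (j + 1) * Pt.substFun g := by
    calc u ^ k = (f ^ k).substFun g := (substFun_pow hg0 f k).symm
      _ = _ := by
        conv_lhs => rw [← hP, hPdec]
        rw [substFun_add hg0, substFun_mul hg0, substFun_pow hg0, substFun_X hg0,
          substFun_sum hg0]
        congr 1
        refine Finset.sum_congr rfl fun i _ => ?_
        rw [substFun_mul hg0, substFun_C hg0, substFun_pow hg0, substFun_X hg0]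
  have hue : u ^ e = u ^ k * v ^ j := by
    have h' : u ^ k * v ^ j = u ^ e * (u * v) ^ j := by
      rw [mul_pow, hj, pow_add]; ring
    rw [h', huv, one_pow, mul_one]
  have hpow : ∀ i ≤ j, u ^ i * (u + X * d⁄dX K u) * v ^ (j + 1)
      = v ^ (j - i) + X * (v ^ (j - i + 1) * d⁄dX K u) := by
    intro i hi
    have h1 : u ^ (i + 1) * v ^ (j + 1) = v ^ (j - i) := by
      have h : u ^ (i + 1) * v ^ (j + 1) = (u * v) ^ (i + 1) * v ^ (j - i) := by
        rw [mul_pow, mul_assoc, ← pow_add]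
        congr 2
        omega
      rw [h, huv, one_pow, one_mul]
    have h2 : u ^ i * v ^ (j + 1) = v ^ (j - i + 1) := by
      have h : u ^ i * v ^ (j + 1) = (u * v) ^ i * v ^ (j - i + 1) := by
        rw [mul_pow, mul_assoc, ← pow_add]
        congr 2
        omega
      rw [h, huv, one_pow, one_mul]
    calc u ^ i * (u + X * d⁄dX K u) * v ^ (j + 1)
        = u ^ (i + 1) * v ^ (j + 1) + X * (u ^ i * v ^ (j + 1) * d⁄dX K u) := by ring
      _ = _ := by rw [h1, h2]
  have hzero : ∀ s : ℕ, coeff (s + 1) (v ^ (s + 1)) + coeff s (v ^ (s + 1 + 1) * d⁄dX K u)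
      = 0 := by
    intro s
    have hdv : d⁄dX K v = -v ^ 2 * d⁄dX K u := PowerSeries.derivative_inv' u
    have hDvt : d⁄dX K (v ^ (s + 1)) = (s + 1) • (-(v ^ (s + 1 + 1) * d⁄dX K u)) := by
      rw [Derivation.leibniz_pow, hdv]
      simp only [smul_eq_mul, Nat.add_sub_cancel]
      congr 1
      ring
    have hc := coeff_derivative (v ^ (s + 1)) s
    rw [hDvt, map_nsmul, nsmul_eq_mul, map_neg] at hc
    have hne : ((s : K) + 1) ≠ 0 := Nat.cast_add_one_ne_zero s
    have hmain : ((s : K) + 1) * (coeff (s + 1) (v ^ (s + 1))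
        + coeff s (v ^ (s + 1 + 1) * d⁄dX K u)) = 0 := by
      push_cast at hc
      linear_combination -hc
    exact (mul_eq_zero.mp hmain).resolve_left hne
  have hmain : g ^ e * d⁄dX K g * v
      = (∑ i ∈ Finset.range (j + 1),
          C (p i) * (X ^ (e + i) * (v ^ (j - i) + X * (v ^ (j - i + 1) * d⁄dX K u))))
        + X ^ (k + 1) * (Pt.substFun g * d⁄dX K g) := by
    have h1 : g ^ e * d⁄dX K g * v = X ^ e * (u ^ k * v ^ (j + 1) * d⁄dX K g) := by
      have hge : g ^ e = X ^ e * u ^ e := by rw [hg, mul_pow]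
      rw [hge, hue, pow_succ]
      ring
    rw [h1, hPg, add_mul, add_mul, mul_add, Finset.sum_mul, Finset.sum_mul, Finset.mul_sum]
    congr 1
    · refine Finset.sum_congr rfl fun i hi => ?_
      rw [Finset.mem_range] at hi
      rw [← hpow i (by omega), hgd]
      have hgi : g ^ i = X ^ i * u ^ i := by rw [hg, mul_pow]
      rw [hgi, pow_add]
      ring
    · have huvj : u ^ (j + 1) * v ^ (j + 1) = 1 := by rw [← mul_pow, huv, one_pow]
      have hk1 : k + 1 = e + (j + 1) := by omega
      have hgj : g ^ (j + 1) = X ^ (j + 1) * u ^ (j + 1) := by rw [hg, mul_pow]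
      have hXk : (X : K⟦X⟧) ^ (k + 1) = X ^ e * X ^ (j + 1) := by rw [hk1, pow_add]
      rw [hgj, hXk]
      linear_combination (X ^ e * X ^ (j + 1) * Pt.substFun g * d⁄dX K g) * huvj
  rw [hgW, hmain, map_add, map_sum]
  have hlast : coeff k (X ^ (k + 1) * (Pt.substFun g * d⁄dX K g)) = 0 := by
    rw [coeff_X_pow_mul', if_neg (by omega)]
  rw [hlast, add_zero]
  have hterm : ∀ i ∈ Finset.range (j + 1),
      coeff k (C (p i) * (X ^ (e + i) * (v ^ (j - i) + X * (v ^ (j - i + 1) * d⁄dX K u))))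
        = if i = j then p j else 0 := by
    intro i hi
    rw [Finset.mem_range] at hi
    rw [coeff_C_mul]
    have hk : k = (j - i) + (e + i) := by omega
    rw [hk, coeff_X_pow_mul]
    by_cases hij : i = j
    · subst hij
      rw [if_pos rfl, Nat.sub_self, map_add]
      have hX0 : coeff 0 (X * (v ^ (0 + 1) * d⁄dX K u)) = 0 := by
        rw [coeff_zero_eq_constantCoeff]
        simp
      rw [hX0, pow_zero, add_zero, coeff_zero_eq_constantCoeff, map_one, mul_one]
    · rw [if_neg hij]
      obtain ⟨s, hs⟩ : ∃ s, j - i = s + 1 := ⟨j - i - 1, by omega⟩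
      rw [hs, map_add, coeff_succ_X_mul, hzero s, mul_zero]
  rw [Finset.sum_congr rfl hterm, Finset.sum_ite_eq' (Finset.range (j + 1)) j fun _ => p j,
    if_pos (Finset.mem_range.mpr (by omega))]
  have hk2 : k = j + e := by omega
  rw [hk2, coeff_X_pow_mul]

theorem lagrange_field (f : K⟦X⟧) (hf : constantCoeff f ≠ 0)
    (g : K⟦X⟧) (hg : g = X * f.substFun g) (φ : K⟦X⟧) (k : ℕ) :
    coeff k (φ.substFun g * PowerSeries.invOfUnit (1 - X * (d⁄dX K f).substFun g) 1)
      = coeff k (φ * f ^ k) := by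
  have hg0 : constantCoeff g = 0 := by rw [hg]; simp
  rw [coeff_substFun_mul hg0, coeff_mul k φ (f ^ k),
    Finset.Nat.sum_antidiagonal_eq_sum_range_succ_mk]
  refine Finset.sum_congr rfl fun e he => ?_
  rw [Finset.mem_range] at he
  rw [lagrange_core f hf g hg k e (by omega)]
  congr 1
  rw [coeff_X_pow_mul', if_pos (by omega)]

end FieldCase

section Transfer

variable {S : Type*} [CommRing S]

theorem map_lhs (ρ : R →+* S) (f g φ : R⟦X⟧) (hg0 : constantCoeff g = 0) :
    PowerSeries.map ρ (φ.substFun g *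
        PowerSeries.invOfUnit (1 - X * (d⁄dX R f).substFun g) 1)
      = (PowerSeries.map ρ φ).substFun (PowerSeries.map ρ g) *
        PowerSeries.invOfUnit
          (1 - X * (d⁄dX S (PowerSeries.map ρ f)).substFun (PowerSeries.map ρ g)) 1 := by
  have hA0 : constantCoeff (1 - X * (d⁄dX R f).substFun g) = 1 := by simp
  have hAmap : PowerSeries.map ρ (1 - X * (d⁄dX R f).substFun g)
      = 1 - X * (d⁄dX S (PowerSeries.map ρ f)).substFun (PowerSeries.map ρ g) := by
    rw [map_sub, map_one, map_mul, PowerSeries.map_X, map_substFun ρ hg0, map_derivative]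
  rw [map_mul, map_substFun ρ hg0, map_invOfUnit_one ρ _ hA0, hAmap]

/-- The universal coefficient ring. -/
noncomputable abbrev URing : Type := MvPolynomial (ℕ ⊕ ℕ) ℚ

/-- Its fraction field. -/
noncomputable abbrev KField : Type := FractionRing URing

/-- The universal power series `f`. -/
noncomputable def UF : PowerSeries URing := PowerSeries.mk fun i => MvPolynomial.X (Sum.inl i)

/-- The universal power series `φ`. -/
noncomputable def UPhi : PowerSeries URing := PowerSeries.mk fun i => MvPolynomial.X (Sum.inr i)

/-- The universal solution `g` of `g = X · f(g)`. -/
noncomputable def UG : PowerSeries URing := gFix UF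

theorem lagrange_universal (k : ℕ) :
    coeff k (UPhi.substFun UG *
        PowerSeries.invOfUnit (1 - X * (d⁄dX URing UF).substFun UG) 1)
      = coeff k (UPhi * UF ^ k) := by
  set ι : URing →+* KField := algebraMap URing KField with hιdef
  have hι : Function.Injective ι := IsFractionRing.injective URing KField
  have hUG : UG = X * UF.substFun UG := gFix_eq UF
  have hUG0 : constantCoeff UG = 0 := gFix_const UF
  have hG0' : constantCoeff (PowerSeries.map ι UG) = 0 := by
    rw [constantCoeff_map, hUG0, map_zero]
  have hGk : PowerSeries.map ι UG = X * (PowerSeries.map ι UF).substFun (PowerSeries.map ι UG) := by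
    conv_lhs => rw [hUG]
    rw [map_mul, PowerSeries.map_X, map_substFun ι hUG0]
  have hUF0 : constantCoeff UF = MvPolynomial.X (Sum.inl 0) := by
    rw [← coeff_zero_eq_constantCoeff, UF, coeff_mk]
  have hFk0 : constantCoeff (PowerSeries.map ι UF) ≠ 0 := by
    rw [constantCoeff_map, hUF0]
    intro h
    exact MvPolynomial.X_ne_zero (Sum.inl 0) (hι (by rw [h, map_zero]))
  have hmain := lagrange_field (PowerSeries.map ι UF) hFk0 (PowerSeries.map ι UG) hGk
    (PowerSeries.map ι UPhi) k
  rw [← map_lhs ι UF UG UPhi hUG0] at hmain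
  rw [← map_pow, ← map_mul] at hmain
  rw [coeff_map, coeff_map] at hmain
  exact hι hmain

end Transfer

end LagrangeAux

open LagrangeAux in
/-- **Classical (single-variable) Lagrange inversion.**  Let `f` be a formal power series over a
commutative `ℚ`-algebra with nonzero constant term, and let `g` be the unique formal power series
with zero constant term satisfying `g = x · f(g)`.  Then for every formal power series `φ` and
every `k : ℕ`, the coefficient of `x^k` in `φ(g) / (1 − x · f'(g))` equals the coefficient of
`x^k` in `φ(x) · f(x)^k`.  (The series `1 − x · f'(g)` has constant term `1`, so its inverse is
given by `invOfUnit _ 1`.) -/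
theorem lagrange_inversion {R : Type*} [CommRing R] [Algebra ℚ R]
    (f : PowerSeries R) (hf : constantCoeff f ≠ 0)
    (g : PowerSeries R) (hg0 : constantCoeff g = 0)
    (hg : g = X * f.substFun g)
    (φ : PowerSeries R) (k : ℕ) :
    coeff k
        (φ.substFun g *
          PowerSeries.invOfUnit (1 - X * (d⁄dX R f).substFun g) 1) =
      coeff k (φ * f ^ k) := by
  set ρ : URing →+* R :=
    (MvPolynomial.aeval (Sum.elim (fun i => coeff i f) (fun i => coeff i φ))).toRingHom
    with hρdef
  have hF : PowerSeries.map ρ UF = f := by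
    ext i
    rw [coeff_map, UF, coeff_mk]
    simp [hρdef]
  have hΦ : PowerSeries.map ρ UPhi = φ := by
    ext i
    rw [coeff_map, UPhi, coeff_mk]
    simp [hρdef]
  have hUGeq : UG = X * UF.substFun UG := gFix_eq UF
  have hUG0 : constantCoeff UG = 0 := gFix_const UF
  have hG : PowerSeries.map ρ UG = g := by
    refine substFix_unique (f := f) ?_ hg
    conv_lhs => rw [hUGeq]
    rw [map_mul, PowerSeries.map_X, map_substFun ρ hUG0, hF]
  calc coeff k (φ.substFun g * PowerSeries.invOfUnit (1 - X * (d⁄dX R f).substFun g) 1)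
      = coeff k (PowerSeries.map ρ (UPhi.substFun UG *
          PowerSeries.invOfUnit (1 - X * (d⁄dX URing UF).substFun UG) 1)) := by
        rw [map_lhs ρ UF UG UPhi hUG0, hF, hΦ, hG]
    _ = ρ (coeff k (UPhi.substFun UG *
          PowerSeries.invOfUnit (1 - X * (d⁄dX URing UF).substFun UG) 1)) := coeff_map ρ k _
    _ = ρ (coeff k (UPhi * UF ^ k)) := by rw [lagrange_universal k]
    _ = coeff k (PowerSeries.map ρ (UPhi * UF ^ k)) := (coeff_map ρ k _).symm
    _ = coeff k (φ * f ^ k) := by rw [map_mul, map_pow, hF, hΦ]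
end
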